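/- Conversely, for the system X' = X, Y' = -(1/ε)Y + (1/ε)X² with ε > 0: if the difference of the two solutions starting from (X₀, Y₀) and (X̃₀, Ỹ₀) satisfies sup_{t ≤ 0} e^{-t}(|X(t)-X̃(t)| + |Y(t)-Ỹ(t)|) < ∞, then (Y₀ - Ỹ₀) - (X₀² - X̃₀²)/(1+2ε) = 0. -/

import Mathlib

open Real

/-- Converse fiber characterization: if the difference of the two explicit solutions of
`X' = X`, `Y' = -(1/ε)Y + (1/ε)X²` satisfies
`sup_{t ≤ 0} e^{-t}(|X(t)-X̃(t)| + |Y(t)-Ỹ(t)|) < ∞`, then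
`(Y₀ - Ỹ₀) - (X₀² - X̃₀²)/(1+2ε) = 0`. -/
theorem stmt2 (ε X₀ Y₀ X₁ Y₁ : ℝ) (hε : 0 < ε)
    (hbdd : ∃ M : ℝ, ∀ t ≤ (0:ℝ),
      Real.exp (-t) *
        (|X₀ * Real.exp t - X₁ * Real.exp t|
        + |(Y₀ * Real.exp (-t/ε) + (X₀^2/(1+2*ε)) * (Real.exp (2*t) - Real.exp (-t/ε)))
          - (Y₁ * Real.exp (-t/ε) + (X₁^2/(1+2*ε)) * (Real.exp (2*t) - Real.exp (-t/ε)))|)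
      ≤ M) :
    (Y₀ - Y₁) - (X₀^2 - X₁^2) / (1 + 2*ε) = 0 := by
  obtain ⟨M, hM⟩ := hbdd
  set d : ℝ := (X₀^2 - X₁^2) / (1 + 2*ε) with hd
  by_contra hc
  set c : ℝ := (Y₀ - Y₁) - d with hcdef
  have hc0 : c ≠ 0 := hc
  have hcpos : 0 < |c| := abs_pos.mpr hc0
  -- M is nonnegative (take t = 0)
  have hM0 : 0 ≤ M := by
    have := hM 0 le_rfl
    have h1 : (0:ℝ) ≤ Real.exp (-(0:ℝ)) *
        (|X₀ * Real.exp 0 - X₁ * Real.exp 0|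
        + |(Y₀ * Real.exp (-(0:ℝ)/ε) + (X₀^2/(1+2*ε)) * (Real.exp (2*0) - Real.exp (-(0:ℝ)/ε)))
          - (Y₁ * Real.exp (-(0:ℝ)/ε) + (X₁^2/(1+2*ε)) * (Real.exp (2*0) - Real.exp (-(0:ℝ)/ε)))|) := by
      positivity
    linarith
  -- choice of t
  set A : ℝ := (M + |d| + 1) / |c| + 1 with hA
  have hA1 : 1 ≤ A := by
    rw [hA]
    have : 0 ≤ (M + |d| + 1) / |c| := by positivity
    linarith
  have hApos : 0 < A := lt_of_lt_of_le one_pos hA1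
  set t : ℝ := -(ε * Real.log A) with ht
  have hlogA : 0 ≤ Real.log A := Real.log_nonneg hA1
  have ht0 : t ≤ 0 := by
    have : 0 ≤ ε * Real.log A := mul_nonneg hε.le hlogA
    simp [ht]; linarith
  have hexp : Real.exp (-t/ε) = A := by
    have : -t/ε = Real.log A := by
      field_simp [ht, hε.ne']
      linarith
    rw [this, Real.exp_log hApos]
  -- the Y-difference equals c * exp(-t/ε) + d * exp(2t)
  have hYdiff : (Y₀ * Real.exp (-t/ε) + (X₀^2/(1+2*ε)) * (Real.exp (2*t) - Real.exp (-t/ε)))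
          - (Y₁ * Real.exp (-t/ε) + (X₁^2/(1+2*ε)) * (Real.exp (2*t) - Real.exp (-t/ε)))
        = c * Real.exp (-t/ε) + d * Real.exp (2*t) := by
    have h2ε : (1 + 2*ε) ≠ 0 := by positivity
    rw [hcdef, hd]
    ring
  have hkey := hM t ht0
  rw [hYdiff] at hkey
  -- lower bounds
  have habs : |c| * A - |d| ≤ |c * Real.exp (-t/ε) + d * Real.exp (2*t)| := by
    have h1 : |c * Real.exp (-t/ε)| - |d * Real.exp (2*t)|
        ≤ |c * Real.exp (-t/ε) + d * Real.exp (2*t)| := by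
      have := abs_sub_abs_le_abs_sub (c * Real.exp (-t/ε)) (-(d * Real.exp (2*t)))
      simpa [sub_neg_eq_add] using this
    have h2 : |c * Real.exp (-t/ε)| = |c| * A := by
      rw [abs_mul, Real.abs_exp, hexp]
    have h3 : |d * Real.exp (2*t)| ≤ |d| := by
      rw [abs_mul, Real.abs_exp]
      have : Real.exp (2*t) ≤ 1 := Real.exp_le_one_iff.mpr (by linarith)
      calc |d| * Real.exp (2*t) ≤ |d| * 1 := by
            exact mul_le_mul_of_nonneg_left this (abs_nonneg d)
        _ = |d| := mul_one _
    linarith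
  have hcA : |c| * A = M + |d| + 1 + |c| := by
    rw [hA, mul_add, mul_one, mul_div_cancel₀ _ hcpos.ne']
  have hlow : M + 1 + |c| ≤ |c * Real.exp (-t/ε) + d * Real.exp (2*t)| := by
    rw [hcA] at habs; linarith
  have hexpt : 1 ≤ Real.exp (-t) := Real.one_le_exp (by linarith)
  have habs2 : (0:ℝ) ≤ |X₀ * Real.exp t - X₁ * Real.exp t| := abs_nonneg _
  have : M + 1 + |c| ≤ Real.exp (-t) *
        (|X₀ * Real.exp t - X₁ * Real.exp t|
        + |c * Real.exp (-t/ε) + d * Real.exp (2*t)|) := by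
    calc M + 1 + |c| ≤ |c * Real.exp (-t/ε) + d * Real.exp (2*t)| := hlow
      _ ≤ |X₀ * Real.exp t - X₁ * Real.exp t|
          + |c * Real.exp (-t/ε) + d * Real.exp (2*t)| := by linarith
      _ ≤ Real.exp (-t) * _ := le_mul_of_one_le_left (by positivity) hexpt
  linarith
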